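/- Under the hypotheses of the directional derivative formula, if x̄ is in the effective domain of Φ with Φ(x̄) ∈ ℝ and x is in the effective domain with Φ(x) = -∞, then Φ'(x̄; x - x̄) = -∞ and the extended integral ∫_T φ'(x̄(t))·(x(t) - x̄(t)) dμ(t) = -∞. -/

import Mathlib

open MeasureTheory ENNReal Filter Set Topology

/-- Positive part of an extended real, in `ℝ≥0∞`. -/
noncomputable def epos (a : EReal) : ℝ≥0∞ := if a = ⊤ then ⊤ else ENNReal.ofReal a.toReal

/-- Extended integral `∫ f dμ := ∫ f₊ dμ - ∫ f₋ dμ` with the convention `∞ - ∞ := ∞`. -/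
noncomputable def eintegral {T : Type*} [MeasurableSpace T] (μ : Measure T) (f : T → EReal) :
    EReal :=
  if (∫⁻ t, epos (f t) ∂μ) = ⊤ then ⊤
  else ((∫⁻ t, epos (f t) ∂μ : ℝ≥0∞) : EReal) - ((∫⁻ t, epos (- f t) ∂μ : ℝ≥0∞) : EReal)


/-- The integral functional Phi(x) := extended integral of phi(x(.)) with respect to mu. -/
noncomputable def Phi {T : Type*} [MeasurableSpace T] (μ : Measure T) (φ : ℝ → EReal)
    (x : T → ℝ) : EReal := eintegral μ (fun t => φ (x t))



lemma epos_measurable : Measurable epos := by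
  unfold epos
  exact Measurable.ite (measurableSet_singleton ⊤) measurable_const
    (ENNReal.measurable_ofReal.comp measurable_ereal_toReal)

lemma epos_coe (r : ℝ) : epos (r : EReal) = ENNReal.ofReal r := by
  simp [epos, EReal.coe_ne_top]

lemma epos_top : epos ⊤ = ⊤ := by simp [epos]

lemma epos_bot : epos ⊥ = 0 := by simp [epos]

lemma epos_mono : Monotone epos := by
  intro a b h
  by_cases hb : b = ⊤
  · simp [epos, hb]
  by_cases ha : a = ⊥
  · simp [epos, ha]
  have ha' : a ≠ ⊤ := fun h' => hb (top_le_iff.1 (h' ▸ h))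
  rw [epos, epos, if_neg ha', if_neg hb]
  exact ENNReal.ofReal_le_ofReal (EReal.toReal_le_toReal h ha hb)

lemma epos_eq_top_iff {a : EReal} : epos a = ⊤ ↔ a = ⊤ := by
  unfold epos
  split_ifs with h
  · simp [h]
  · simp [h, ENNReal.ofReal_ne_top]

lemma eintegral_real_decode {T : Type*} [MeasurableSpace T] {μ : Measure T} {f : T → EReal} {r : ℝ}
    (h : eintegral μ f = (r : EReal)) :
    (∫⁻ t, epos (f t) ∂μ) ≠ ⊤ ∧ (∫⁻ t, epos (-f t) ∂μ) ≠ ⊤ := by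
  unfold eintegral at h
  split_ifs at h with h1
  · exact absurd h.symm (EReal.coe_ne_top r)
  refine ⟨h1, ?_⟩
  intro h2
  rw [h2, EReal.coe_ennreal_top, EReal.sub_top] at h
  exact (EReal.coe_ne_bot r) h.symm

lemma eintegral_bot_decode {T : Type*} [MeasurableSpace T] {μ : Measure T} {f : T → EReal}
    (h : eintegral μ f = ⊥) :
    (∫⁻ t, epos (f t) ∂μ) ≠ ⊤ ∧ (∫⁻ t, epos (-f t) ∂μ) = ⊤ := by
  unfold eintegral at h
  split_ifs at h with h1
  · exact absurd h top_ne_bot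
  refine ⟨h1, ?_⟩
  by_contra h2
  rw [sub_eq_add_neg, EReal.add_eq_bot_iff] at h
  rcases h with h | h
  · exact EReal.coe_ennreal_ne_bot _ h
  · rw [EReal.neg_eq_bot_iff, EReal.coe_ennreal_eq_top_iff] at h
    exact h2 h

lemma eintegral_eq_bot {T : Type*} [MeasurableSpace T] {μ : Measure T} {f : T → EReal}
    (hpos : (∫⁻ t, epos (f t) ∂μ) ≠ ⊤) (hneg : (∫⁻ t, epos (-f t) ∂μ) = ⊤) :
    eintegral μ f = ⊥ := by
  unfold eintegral
  rw [if_neg hpos, hneg, EReal.coe_ennreal_top, EReal.sub_top]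

/-- If `Φ(x̄) ∈ ℝ` and `Φ(x) = -∞` (with `x` in the effective domain of `Φ`), then
`Φ'(x̄; x - x̄) = -∞` and the extended integral of `φ'(x̄(t))·(x(t) - x̄(t))` equals `-∞`. -/
theorem stmt_10 {T : Type*} [MeasurableSpace T] (μ : Measure T) (φ : ℝ → EReal)
    (hbot : ∀ u, φ u ≠ ⊥) (hproper : ∃ u, φ u ≠ ⊤) (hlsc : LowerSemicontinuous φ)
    (hconv : ∀ u v a b : ℝ, 0 ≤ a → 0 ≤ b → a + b = 1 →
      φ (a * u + b * v) ≤ (a : EReal) * φ u + (b : EReal) * φ v)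
    (hstrict : ∀ u v : ℝ, φ u ≠ ⊤ → φ v ≠ ⊤ → u ≠ v → ∀ a b : ℝ, 0 < a → 0 < b → a + b = 1 →
      φ (a * u + b * v) < (a : EReal) * φ u + (b : EReal) * φ v)
    (hint : (interior {u : ℝ | φ u ≠ ⊤}).Nonempty)
    (dphi : ℝ → EReal)
    (hdphi : ∀ u v : ℝ, φ u ≠ ⊤ → φ v ≠ ⊤ →
      Tendsto (fun s : ℝ => ((((φ (u + s * (v - u))).toReal - (φ u).toReal) / s : ℝ) : EReal))
        (𝓝[>] (0 : ℝ)) (𝓝 (dphi u * ((v : EReal) - (u : EReal)))))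
    (X : Subspace ℝ (T → ℝ)) (hX : ∀ x ∈ X, Measurable x)
    (xb x : T → ℝ) (hxb : xb ∈ X) (hx : x ∈ X)
    (hPhib : ∃ r : ℝ, Phi μ φ xb = (r : EReal)) (hPhix : Phi μ φ x = ⊥) :
    Tendsto (fun s : ℝ => (Phi μ φ (xb + s • (x - xb)) - Phi μ φ xb) * ((s⁻¹ : ℝ) : EReal))
        (𝓝[>] (0 : ℝ)) (𝓝 ⊥) ∧
      eintegral μ (fun t => dphi (xb t) * ((x t : EReal) - (xb t : EReal))) = ⊥ := by
  classical
  obtain ⟨r, hr⟩ := hPhib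
  have hmx : Measurable x := hX x hx
  have hmxb : Measurable xb := hX xb hxb
  have hφm : Measurable φ := hlsc.measurable
  -- measurability of the positive/negative part compositions
  have hm0p : Measurable (fun t => epos (φ (xb t))) :=
    epos_measurable.comp (hφm.comp hmxb)
  have hm0n : Measurable (fun t => epos (-φ (xb t))) :=
    epos_measurable.comp ((hφm.comp hmxb).neg)
  have hm1p : Measurable (fun t => epos (φ (x t))) :=
    epos_measurable.comp (hφm.comp hmx)
  have hm1n : Measurable (fun t => epos (-φ (x t))) :=
    epos_measurable.comp ((hφm.comp hmx).neg)
  -- decode the hypotheses on Phi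
  obtain ⟨hA0, hB0⟩ := eintegral_real_decode hr
  obtain ⟨hA1, hB1⟩ := eintegral_bot_decode hPhix
  -- a.e. finiteness
  have hae_xb : ∀ᵐ t ∂μ, φ (xb t) ≠ ⊤ := by
    filter_upwards [ae_lt_top hm0p hA0] with t ht
    intro h
    rw [h, epos_top] at ht
    exact absurd ht (lt_irrefl _)
  have hae_x : ∀ᵐ t ∂μ, φ (x t) ≠ ⊤ := by
    filter_upwards [ae_lt_top hm1p hA1] with t ht
    intro h
    rw [h, epos_top] at ht
    exact absurd ht (lt_irrefl _)
  -- pointwise convexity inequality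
  have hconv' : ∀ (s : ℝ), 0 < s → s < 1 → ∀ t : T,
      φ (xb t + s * (x t - xb t)) ≤ ((1 - s : ℝ) : EReal) * φ (xb t) + ((s : ℝ) : EReal) * φ (x t) := by
    intro s hs hs1 t
    have harg : xb t + s * (x t - xb t) = (1 - s) * xb t + s * x t := by ring
    rw [harg]
    exact hconv (xb t) (x t) (1 - s) s (by linarith) hs.le (by ring)
  -- Phi at intermediate points is ⊥
  have hPhis : ∀ s : ℝ, 0 < s → s < 1 → Phi μ φ (xb + s • (x - xb)) = ⊥ := by
    intro s hs hs1
    have hy : ∀ t : T, (xb + s • (x - xb)) t = xb t + s * (x t - xb t) := by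
      intro t; simp [Pi.add_apply, Pi.smul_apply, Pi.sub_apply, smul_eq_mul]
    have hPhi_eq : Phi μ φ (xb + s • (x - xb)) =
        eintegral μ (fun t => φ (xb t + s * (x t - xb t))) := by
      rfl
    rw [hPhi_eq]
    -- pointwise positive part bound
    have P1 : ∀ t : T, epos (φ (xb t + s * (x t - xb t))) ≤
        ENNReal.ofReal (1 - s) * epos (φ (xb t)) + ENNReal.ofReal s * epos (φ (x t)) := by
      intro t
      by_cases hb : φ (xb t) = ⊤
      · rw [hb, epos_top, ENNReal.mul_top (ENNReal.ofReal_pos.2 (by linarith)).ne', top_add]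
        exact le_top
      by_cases hc : φ (x t) = ⊤
      · rw [hc, epos_top, ENNReal.mul_top (ENNReal.ofReal_pos.2 hs).ne', add_top]
        exact le_top
      have hbB : φ (xb t) = (((φ (xb t)).toReal : ℝ) : EReal) := (EReal.coe_toReal hb (hbot _)).symm
      have hcC : φ (x t) = (((φ (x t)).toReal : ℝ) : EReal) := (EReal.coe_toReal hc (hbot _)).symm
      set B := (φ (xb t)).toReal
      set C := (φ (x t)).toReal
      have hle : φ (xb t + s * (x t - xb t)) ≤ (((1 - s) * B + s * C : ℝ) : EReal) := by
        have := hconv' s hs hs1 t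
        rw [hbB, hcC] at this
        convert this using 1
        rw [EReal.coe_add, EReal.coe_mul, EReal.coe_mul]
      calc epos (φ (xb t + s * (x t - xb t))) ≤ epos (((1 - s) * B + s * C : ℝ) : EReal) :=
            epos_mono hle
        _ = ENNReal.ofReal ((1 - s) * B + s * C) := epos_coe _
        _ ≤ ENNReal.ofReal ((1 - s) * B) + ENNReal.ofReal (s * C) := ENNReal.ofReal_add_le
        _ = ENNReal.ofReal (1 - s) * ENNReal.ofReal B + ENNReal.ofReal s * ENNReal.ofReal C := by
            rw [ENNReal.ofReal_mul (by linarith), ENNReal.ofReal_mul hs.le]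
        _ = ENNReal.ofReal (1 - s) * epos (φ (xb t)) + ENNReal.ofReal s * epos (φ (x t)) := by
            rw [hbB, epos_coe, hcC, epos_coe]
    -- positive part is finite
    have hposle : (∫⁻ t, epos (φ (xb t + s * (x t - xb t))) ∂μ) ≤
        ENNReal.ofReal (1 - s) * (∫⁻ t, epos (φ (xb t)) ∂μ) +
        ENNReal.ofReal s * (∫⁻ t, epos (φ (x t)) ∂μ) := by
      calc (∫⁻ t, epos (φ (xb t + s * (x t - xb t))) ∂μ)
          ≤ ∫⁻ t, (ENNReal.ofReal (1 - s) * epos (φ (xb t)) +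
              ENNReal.ofReal s * epos (φ (x t))) ∂μ := lintegral_mono P1
        _ = _ := by
            rw [lintegral_add_left (hm0p.const_mul _),
              lintegral_const_mul' _ _ ENNReal.ofReal_ne_top,
              lintegral_const_mul' _ _ ENNReal.ofReal_ne_top]
    have hposne : (∫⁻ t, epos (φ (xb t + s * (x t - xb t))) ∂μ) ≠ ⊤ := by
      intro h
      rw [h] at hposle
      have : ENNReal.ofReal (1 - s) * (∫⁻ t, epos (φ (xb t)) ∂μ) +
          ENNReal.ofReal s * (∫⁻ t, epos (φ (x t)) ∂μ) < ⊤ :=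
        ENNReal.add_lt_top.2 ⟨ENNReal.mul_lt_top ENNReal.ofReal_lt_top hA0.lt_top,
          ENNReal.mul_lt_top ENNReal.ofReal_lt_top hA1.lt_top⟩
      exact absurd (top_le_iff.1 hposle) this.ne
    -- pointwise negative part bound
    have P2 : ∀ t : T, ENNReal.ofReal s * epos (-φ (x t)) ≤
        epos (-φ (xb t + s * (x t - xb t))) + ENNReal.ofReal (1 - s) * epos (φ (xb t)) := by
      intro t
      by_cases hb : φ (xb t) = ⊤
      · rw [hb, epos_top, ENNReal.mul_top (ENNReal.ofReal_pos.2 (by linarith)).ne', add_top]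
        exact le_top
      by_cases hc : φ (x t) = ⊤
      · rw [hc]
        simp [epos_bot]
      have hbB : φ (xb t) = (((φ (xb t)).toReal : ℝ) : EReal) := (EReal.coe_toReal hb (hbot _)).symm
      have hcC : φ (x t) = (((φ (x t)).toReal : ℝ) : EReal) := (EReal.coe_toReal hc (hbot _)).symm
      set B := (φ (xb t)).toReal
      set C := (φ (x t)).toReal
      have hle : φ (xb t + s * (x t - xb t)) ≤ (((1 - s) * B + s * C : ℝ) : EReal) := by
        have := hconv' s hs hs1 t
        rw [hbB, hcC] at this
        convert this using 1
        rw [EReal.coe_add, EReal.coe_mul, EReal.coe_mul]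
      have hyne : φ (xb t + s * (x t - xb t)) ≠ ⊤ :=
        ne_top_of_le_ne_top (EReal.coe_ne_top _) hle
      have hyY : φ (xb t + s * (x t - xb t)) =
          (((φ (xb t + s * (x t - xb t))).toReal : ℝ) : EReal) :=
        (EReal.coe_toReal hyne (hbot _)).symm
      set Y := (φ (xb t + s * (x t - xb t))).toReal
      have hYle : Y ≤ (1 - s) * B + s * C := by
        have := EReal.toReal_le_toReal hle (hbot _) (EReal.coe_ne_top _)
        rwa [EReal.toReal_coe] at this
      have e1 : epos (-φ (x t)) = ENNReal.ofReal (-C) := by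
        rw [hcC, ← EReal.coe_neg, epos_coe]
      have e2 : epos (-φ (xb t + s * (x t - xb t))) = ENNReal.ofReal (-Y) := by
        rw [hyY, ← EReal.coe_neg, epos_coe]
      have e3 : epos (φ (xb t)) = ENNReal.ofReal B := by rw [hbB, epos_coe]
      rw [e1, e2, e3, ← ENNReal.ofReal_mul hs.le, ← ENNReal.ofReal_mul (by linarith : (0:ℝ) ≤ 1 - s)]
      calc ENNReal.ofReal (s * -C) ≤ ENNReal.ofReal (-Y + (1 - s) * B) :=
            ENNReal.ofReal_le_ofReal (by linarith)
        _ ≤ ENNReal.ofReal (-Y) + ENNReal.ofReal ((1 - s) * B) := ENNReal.ofReal_add_le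
    -- negative part is infinite
    have hnegtop : (∫⁻ t, epos (-φ (xb t + s * (x t - xb t))) ∂μ) = ⊤ := by
      by_contra hne
      have hchain : (⊤ : ℝ≥0∞) ≤ (∫⁻ t, epos (-φ (xb t + s * (x t - xb t))) ∂μ) +
          ENNReal.ofReal (1 - s) * (∫⁻ t, epos (φ (xb t)) ∂μ) := by
        calc (⊤ : ℝ≥0∞) = ENNReal.ofReal s * (∫⁻ t, epos (-φ (x t)) ∂μ) := by
              rw [hB1, ENNReal.mul_top (ENNReal.ofReal_pos.2 hs).ne']
          _ = ∫⁻ t, ENNReal.ofReal s * epos (-φ (x t)) ∂μ :=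
              (lintegral_const_mul' _ _ ENNReal.ofReal_ne_top).symm
          _ ≤ ∫⁻ t, (epos (-φ (xb t + s * (x t - xb t))) +
              ENNReal.ofReal (1 - s) * epos (φ (xb t))) ∂μ := lintegral_mono P2
          _ = _ := by
              rw [lintegral_add_right _ (hm0p.const_mul _),
                lintegral_const_mul' _ _ ENNReal.ofReal_ne_top]
      have : (∫⁻ t, epos (-φ (xb t + s * (x t - xb t))) ∂μ) +
          ENNReal.ofReal (1 - s) * (∫⁻ t, epos (φ (xb t)) ∂μ) < ⊤ :=
        ENNReal.add_lt_top.2 ⟨lt_top_iff_ne_top.2 hne,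
          ENNReal.mul_lt_top ENNReal.ofReal_lt_top hA0.lt_top⟩
      exact absurd (top_le_iff.1 hchain) this.ne
    exact eintegral_eq_bot hposne hnegtop
  constructor
  · -- the difference quotient tends to ⊥
    have hev : (fun _ : ℝ => (⊥ : EReal)) =ᶠ[𝓝[>] (0:ℝ)] fun s : ℝ =>
        (Phi μ φ (xb + s • (x - xb)) - Phi μ φ xb) * ((s⁻¹ : ℝ) : EReal) := by
      filter_upwards [Ioo_mem_nhdsGT_of_mem (left_mem_Ico.2 zero_lt_one)] with s hs
      rw [hPhis s hs.1 hs.2, hr, EReal.bot_sub, EReal.bot_mul_coe_of_pos (inv_pos.2 hs.1)]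
    exact Tendsto.congr' hev tendsto_const_nhds
  · -- the extended integral of the derivative term is ⊥
    -- key a.e. upper bound on g
    have hg_le : ∀ᵐ t ∂μ, dphi (xb t) * ((x t : EReal) - (xb t : EReal)) ≤
        (((φ (x t)).toReal - (φ (xb t)).toReal : ℝ) : EReal) := by
      filter_upwards [hae_xb, hae_x] with t hu hv
      set u := xb t
      set v := x t
      set B := (φ u).toReal
      set C := (φ v).toReal
      refine le_of_tendsto (hdphi u v hu hv) ?_
      filter_upwards [Ioo_mem_nhdsGT_of_mem (show (0:ℝ) ∈ Ico (0:ℝ) 1 by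
        exact ⟨le_refl _, zero_lt_one⟩)] with s hs
      obtain ⟨hs0, hs1⟩ := hs
      have harg : u + s * (v - u) = (1 - s) * u + s * v := by ring
      have hle : φ (u + s * (v - u)) ≤ (((1 - s) * B + s * C : ℝ) : EReal) := by
        rw [harg]
        have := hconv u v (1 - s) s (by linarith) hs0.le (by ring)
        have hbB : φ u = ((B : ℝ) : EReal) := (EReal.coe_toReal hu (hbot _)).symm
        have hcC : φ v = ((C : ℝ) : EReal) := (EReal.coe_toReal hv (hbot _)).symm
        rw [hbB, hcC] at this
        convert this using 1
        rw [EReal.coe_add, EReal.coe_mul, EReal.coe_mul]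
      have hyne : φ (u + s * (v - u)) ≠ ⊤ :=
        ne_top_of_le_ne_top (EReal.coe_ne_top _) hle
      have hYle : (φ (u + s * (v - u))).toReal ≤ (1 - s) * B + s * C := by
        have := EReal.toReal_le_toReal hle (hbot _) (EReal.coe_ne_top _)
        rwa [EReal.toReal_coe] at this
      rw [EReal.coe_le_coe_iff]
      rw [div_le_iff₀ hs0]
      nlinarith [hYle]
    -- positive part finite
    have hposne2 : (∫⁻ t, epos (dphi (xb t) * ((x t : EReal) - (xb t : EReal))) ∂μ) ≠ ⊤ := by
      have hb : ∀ᵐ t ∂μ, epos (dphi (xb t) * ((x t : EReal) - (xb t : EReal))) ≤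
          epos (φ (x t)) + epos (-φ (xb t)) := by
        filter_upwards [hg_le, hae_xb, hae_x] with t hgle hu hv
        have hbB : φ (xb t) = (((φ (xb t)).toReal : ℝ) : EReal) :=
          (EReal.coe_toReal hu (hbot _)).symm
        have hcC : φ (x t) = (((φ (x t)).toReal : ℝ) : EReal) :=
          (EReal.coe_toReal hv (hbot _)).symm
        set B := (φ (xb t)).toReal
        set C := (φ (x t)).toReal
        calc epos (dphi (xb t) * ((x t : EReal) - (xb t : EReal)))
            ≤ epos (((C - B : ℝ)) : EReal) := epos_mono hgle
          _ = ENNReal.ofReal (C - B) := epos_coe _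
          _ ≤ ENNReal.ofReal C + ENNReal.ofReal (-B) := by
              calc ENNReal.ofReal (C - B) = ENNReal.ofReal (C + -B) := by ring_nf
                _ ≤ _ := ENNReal.ofReal_add_le
          _ = epos (φ (x t)) + epos (-φ (xb t)) := by
              rw [hcC, epos_coe, hbB, ← EReal.coe_neg, epos_coe]
      intro h
      have hle2 : (∫⁻ t, epos (dphi (xb t) * ((x t : EReal) - (xb t : EReal))) ∂μ) ≤
          (∫⁻ t, epos (φ (x t)) ∂μ) + (∫⁻ t, epos (-φ (xb t)) ∂μ) := by
        calc (∫⁻ t, epos (dphi (xb t) * ((x t : EReal) - (xb t : EReal))) ∂μ)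
            ≤ ∫⁻ t, (epos (φ (x t)) + epos (-φ (xb t))) ∂μ := lintegral_mono_ae hb
          _ = _ := lintegral_add_left hm1p _
      rw [h] at hle2
      have : (∫⁻ t, epos (φ (x t)) ∂μ) + (∫⁻ t, epos (-φ (xb t)) ∂μ) < ⊤ :=
        ENNReal.add_lt_top.2 ⟨hA1.lt_top, hB0.lt_top⟩
      exact absurd (top_le_iff.1 hle2) this.ne
    -- negative part infinite
    have hnegtop2 : (∫⁻ t, epos (-(dphi (xb t) * ((x t : EReal) - (xb t : EReal)))) ∂μ) = ⊤ := by
      have hb : ∀ᵐ t ∂μ, epos (-φ (x t)) - epos (-φ (xb t)) ≤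
          epos (-(dphi (xb t) * ((x t : EReal) - (xb t : EReal)))) := by
        filter_upwards [hg_le, hae_xb, hae_x] with t hgle hu hv
        rw [tsub_le_iff_right]
        have hbB : φ (xb t) = (((φ (xb t)).toReal : ℝ) : EReal) :=
          (EReal.coe_toReal hu (hbot _)).symm
        have hcC : φ (x t) = (((φ (x t)).toReal : ℝ) : EReal) :=
          (EReal.coe_toReal hv (hbot _)).symm
        set B := (φ (xb t)).toReal
        set C := (φ (x t)).toReal
        have hneg : (((B - C : ℝ)) : EReal) ≤ -(dphi (xb t) * ((x t : EReal) - (xb t : EReal))) := by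
          rw [show ((B - C : ℝ) : EReal) = -(((C - B : ℝ)) : EReal) by
            rw [← EReal.coe_neg]; norm_num]
          exact EReal.neg_le_neg_iff.2 hgle
        have h1 : ENNReal.ofReal (B - C) ≤
            epos (-(dphi (xb t) * ((x t : EReal) - (xb t : EReal)))) := by
          rw [← epos_coe (B - C)]
          exact epos_mono hneg
        calc epos (-φ (x t)) = ENNReal.ofReal (-C) := by
              rw [hcC, ← EReal.coe_neg, epos_coe]
          _ = ENNReal.ofReal ((B - C) + -B) := by ring_nf
          _ ≤ ENNReal.ofReal (B - C) + ENNReal.ofReal (-B) := ENNReal.ofReal_add_le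
          _ ≤ epos (-(dphi (xb t) * ((x t : EReal) - (xb t : EReal)))) + epos (-φ (xb t)) := by
              apply add_le_add h1
              rw [hbB, ← EReal.coe_neg, epos_coe]
      have hsub : (⊤ : ℝ≥0∞) ≤
          ∫⁻ t, (epos (-φ (x t)) - epos (-φ (xb t))) ∂μ := by
        have := lintegral_sub_le (fun t => epos (-φ (xb t))) (fun t => epos (-φ (x t))) hm0n (μ := μ)
        rw [hB1, ENNReal.top_sub hB0] at this
        exact this
      have : (⊤ : ℝ≥0∞) ≤ ∫⁻ t, epos (-(dphi (xb t) * ((x t : EReal) - (xb t : EReal)))) ∂μ :=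
        hsub.trans (lintegral_mono_ae hb)
      exact top_le_iff.1 this
    exact eintegral_eq_bot hposne2 hnegtop2
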